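/- Let U be a feasible solution of M-CLP with slack x and P a feasible solution of M-CLP* with slack q. Then z(U) = z*(P) if and only if the complementary slackness conditions hold: Σ_{k=1}^K ∫_{[0,T]} x_k(T−s) dP_k(s) = 0 and Σ_{j=1}^J ∫_{[0,T]} q_j(T−t) dU_j(t) = 0. In that case U is an optimal solution of M-CLP and P is an optimal solution of M-CLP*. -/

import Mathlib

open MeasureTheory Filter

/-- A feasible solution of M-CLP. -/
def PrimalFeasible {K J : ℕ} (A : Matrix (Fin K) (Fin J) ℝ) (b β lam : Fin K → ℝ) (T : ℝ)
    (U : ℝ → Fin J → ℝ) : Prop :=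
  (∀ j, MonotoneOn (fun t => U t j) (Set.Icc 0 T)) ∧
  (∀ j, ∀ t ∈ Set.Ico (0:ℝ) T,
    Tendsto (fun s => U s j) (nhdsWithin t (Set.Ioi t)) (nhds (U t j))) ∧
  (∀ j, 0 ≤ U 0 j) ∧
  (∀ t ∈ Set.Ico (0:ℝ) T, ∀ k, A.mulVec (U t) k ≤ β k + t * b k) ∧
  (∀ k, A.mulVec (U T) k ≤ β k + T * b k + lam k)

/-- A feasible solution of M-CLP*. -/
def DualFeasible {K J : ℕ} (A : Matrix (Fin K) (Fin J) ℝ) (c γ μ : Fin J → ℝ) (T : ℝ)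
    (P : ℝ → Fin K → ℝ) : Prop :=
  (∀ k, MonotoneOn (fun s => P s k) (Set.Icc 0 T)) ∧
  (∀ k, ∀ s ∈ Set.Ico (0:ℝ) T,
    Tendsto (fun r => P r k) (nhdsWithin s (Set.Ioi s)) (nhds (P s k))) ∧
  (∀ k, 0 ≤ P 0 k) ∧
  (∀ s ∈ Set.Ico (0:ℝ) T, ∀ j, γ j + s * c j ≤ A.transpose.mulVec (P s) j) ∧
  (∀ j, γ j + T * c j + μ j ≤ A.transpose.mulVec (P T) j)

/-- `ν i` is the Lebesgue–Stieltjes measure on `[0,T]` of the (right-continuous,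
nondecreasing) function `F · i`, with the convention `F (0-) i = 0`. -/
def LSFamily {I : Type*} (T : ℝ) (F : ℝ → I → ℝ) (ν : I → Measure ℝ) : Prop :=
  ∀ i, ν i (Set.Icc 0 T)ᶜ = 0 ∧
    ∀ x ∈ Set.Icc (0:ℝ) T, ν i (Set.Icc 0 x) = ENNReal.ofReal (F x i)

/-- The M-CLP objective. -/
noncomputable def zPrimal {J : ℕ} (c γ μ : Fin J → ℝ) (T : ℝ) (U : ℝ → Fin J → ℝ)
    (ν : Fin J → Measure ℝ) : ℝ :=
  (∑ j, μ j * U 0 j) + ∑ j, ∫ t in Set.Icc (0:ℝ) T, (γ j + (T - t) * c j) ∂(ν j)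

/-- The M-CLP* objective. -/
noncomputable def zDual {K : ℕ} (b β lam : Fin K → ℝ) (T : ℝ) (P : ℝ → Fin K → ℝ)
    (ν : Fin K → Measure ℝ) : ℝ :=
  (∑ k, lam k * P 0 k) + ∑ k, ∫ s in Set.Icc (0:ℝ) T, (β k + (T - s) * b k) ∂(ν k)

/-- The primal slack `x(t) = β + t·b − A·U(t)` for `0 ≤ t < T`, and
`x(T) = β + T·b + λ − A·U(T)`. -/
noncomputable def xSlack {K J : ℕ} (A : Matrix (Fin K) (Fin J) ℝ) (b β lam : Fin K → ℝ)
    (T : ℝ) (U : ℝ → Fin J → ℝ) (t : ℝ) (k : Fin K) : ℝ :=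
  β k + t * b k + (if t < T then 0 else lam k) - A.mulVec (U t) k

/-- The dual slack `q(s) = Aᵀ·P(s) − γ − s·c` for `0 ≤ s < T`, and
`q(T) = Aᵀ·P(T) − γ − T·c − μ`. -/
noncomputable def qSlack {K J : ℕ} (A : Matrix (Fin K) (Fin J) ℝ) (c γ μ : Fin J → ℝ)
    (T : ℝ) (P : ℝ → Fin K → ℝ) (s : ℝ) (j : Fin J) : ℝ :=
  A.transpose.mulVec (P s) j - γ j - s * c j - (if s < T then 0 else μ j)


open Set

section Aux

variable {T : ℝ}

/-- mass outside `[0,T]` is zero, in a.e. form -/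
lemma ae_mem_Icc_of_compl_null {ν : Measure ℝ} (h : ν (Icc 0 T)ᶜ = 0) :
    ∀ᵐ t ∂ν, t ∈ Icc (0:ℝ) T := by
  rw [ae_iff]
  exact h

lemma finite_of_ls (hT : 0 ≤ T) {ν : Measure ℝ} {M : ℝ}
    (h0 : ν (Icc 0 T)ᶜ = 0) (hM : ν (Icc 0 T) = ENNReal.ofReal M) :
    IsFiniteMeasure ν := by
  constructor
  rw [← measure_add_measure_compl (measurableSet_Icc (a := (0:ℝ)) (b := T)), h0, hM]
  simp [ENNReal.ofReal_lt_top]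

lemma Iic_measure_eq {ν : Measure ℝ} (h0 : ν (Icc 0 T)ᶜ = 0) {x : ℝ} (hx : x ∈ Icc (0:ℝ) T)
    {v : ℝ} (hv : ν (Icc 0 x) = ENNReal.ofReal v) : ν (Iic x) = ENNReal.ofReal v := by
  have hsub : Iio (0:ℝ) ⊆ (Icc 0 T)ᶜ := fun t ht => by
    simp only [mem_Iio] at ht
    simp only [mem_compl_iff, mem_Icc, not_and_or, not_le]
    left; exact ht
  have hnull : ν (Iio 0) = 0 := measure_mono_null hsub h0
  have hun : Iic x = Iio 0 ∪ Icc 0 x := by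
    ext t
    simp only [mem_Iic, mem_union, mem_Iio, mem_Icc]
    constructor
    · intro ht
      rcases lt_or_ge t 0 with h | h
      · exact Or.inl h
      · exact Or.inr ⟨h, ht⟩
    · rintro (h | h)
      · linarith [hx.1]
      · exact h.2
  rw [hun]
  refine le_antisymm ?_ ?_
  · calc ν (Iio 0 ∪ Icc 0 x) ≤ ν (Iio 0) + ν (Icc 0 x) := measure_union_le _ _
      _ = ENNReal.ofReal v := by rw [hnull, hv, zero_add]
  · rw [← hv]; exact measure_mono subset_union_right

/-- The key Fubini symmetry. -/
lemma key_fubini (ν ν' : Measure ℝ) [IsFiniteMeasure ν] [IsFiniteMeasure ν']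
    (hν : ∀ᵐ t ∂ν, t ∈ Icc (0:ℝ) T) (hν' : ∀ᵐ s ∂ν', s ∈ Icc (0:ℝ) T)
    (f g : ℝ → ℝ)
    (hf : ∀ x ∈ Icc (0:ℝ) T, ν' (Iic x) = ENNReal.ofReal (f x))
    (hg : ∀ x ∈ Icc (0:ℝ) T, ν (Iic x) = ENNReal.ofReal (g x))
    (hf0 : ∀ x ∈ Icc (0:ℝ) T, 0 ≤ f x) (hg0 : ∀ x ∈ Icc (0:ℝ) T, 0 ≤ g x) :
    ∫ t, f (T - t) ∂ν = ∫ s, g (T - s) ∂ν' := by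
  set F : ℝ → ℝ := fun x => (ν' (Iic x)).toReal with hF
  set G : ℝ → ℝ := fun x => (ν (Iic x)).toReal with hG
  have hFmono : Monotone F := fun a b hab =>
    ENNReal.toReal_mono (measure_ne_top _ _) (measure_mono (Iic_subset_Iic.2 hab))
  have hGmono : Monotone G := fun a b hab =>
    ENNReal.toReal_mono (measure_ne_top _ _) (measure_mono (Iic_subset_Iic.2 hab))
  have hmemT : ∀ t ∈ Icc (0:ℝ) T, T - t ∈ Icc (0:ℝ) T := fun t ht =>
    ⟨by linarith [ht.2], by linarith [ht.1]⟩
  have hFae : (fun t => f (T - t)) =ᵐ[ν] fun t => F (T - t) := by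
    filter_upwards [hν] with t ht
    have h1 := hmemT t ht
    rw [hF]; simp only
    rw [hf _ h1, ENNReal.toReal_ofReal (hf0 _ h1)]
  have hGae : (fun s => g (T - s)) =ᵐ[ν'] fun s => G (T - s) := by
    filter_upwards [hν'] with s hs
    have h1 := hmemT s hs
    rw [hG]; simp only
    rw [hg _ h1, ENNReal.toReal_ofReal (hg0 _ h1)]
  rw [integral_congr_ae hFae, integral_congr_ae hGae]
  have hFanti : Antitone fun t => F (T - t) := fun a b hab => hFmono (by linarith)
  have hGanti : Antitone fun s => G (T - s) := fun a b hab => hGmono (by linarith)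
  rw [integral_eq_lintegral_of_nonneg_ae (Eventually.of_forall fun t => ENNReal.toReal_nonneg)
    hFanti.measurable.aestronglyMeasurable,
    integral_eq_lintegral_of_nonneg_ae (Eventually.of_forall fun t => ENNReal.toReal_nonneg)
    hGanti.measurable.aestronglyMeasurable]
  congr 1
  have h1 : ∀ t : ℝ, ENNReal.ofReal (F (T - t)) = ν' (Iic (T - t)) := fun t =>
    ENNReal.ofReal_toReal (measure_ne_top _ _)
  have h2 : ∀ s : ℝ, ENNReal.ofReal (G (T - s)) = ν (Iic (T - s)) := fun s =>
    ENNReal.ofReal_toReal (measure_ne_top _ _)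
  simp only [ENNReal.ofReal_toReal, ne_eq, measure_ne_top, not_false_eq_true]
  set S : Set (ℝ × ℝ) := {p | p.1 + p.2 ≤ T} with hS
  have hSm : MeasurableSet S := measurableSet_le (by fun_prop) measurable_const
  have e1 : ∫⁻ t, ν' (Iic (T - t)) ∂ν = ν.prod ν' S := by
    rw [Measure.prod_apply hSm]
    refine lintegral_congr fun t => ?_
    congr 1
    ext s
    simp only [mem_Iic, mem_preimage, hS, mem_setOf_eq]
    constructor <;> intro h <;> linarith
  have e2 : ∫⁻ s, ν (Iic (T - s)) ∂ν' = ν'.prod ν S := by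
    rw [Measure.prod_apply hSm]
    refine lintegral_congr fun s => ?_
    congr 1
    ext t
    simp only [mem_Iic, mem_preimage, hS, mem_setOf_eq]
    constructor <;> intro h <;> linarith
  have e3 : ν'.prod ν S = ν.prod ν' S := by
    rw [← Measure.prod_swap, Measure.map_apply measurable_swap hSm]
    congr 1
    ext p
    simp only [mem_preimage, Prod.swap, hS, mem_setOf_eq]
    constructor <;> intro h <;> linarith
  rw [e1, e2, e3]

/-- Integrability of a "distribution function at `T - t`" against a finite measure
supported in `[0,T]`. -/
lemma integrable_comp_sub {m : Measure ℝ} [IsFiniteMeasure m]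
    (hm : ∀ᵐ t ∂m, t ∈ Icc (0:ℝ) T)
    (ν' : Measure ℝ) [IsFiniteMeasure ν'] (f : ℝ → ℝ)
    (hf : ∀ x ∈ Icc (0:ℝ) T, ν' (Iic x) = ENNReal.ofReal (f x))
    (hf0 : ∀ x ∈ Icc (0:ℝ) T, 0 ≤ f x) :
    Integrable (fun t => f (T - t)) m := by
  set F : ℝ → ℝ := fun x => (ν' (Iic x)).toReal with hF
  have hFmono : Monotone F := fun a b hab =>
    ENNReal.toReal_mono (measure_ne_top _ _) (measure_mono (Iic_subset_Iic.2 hab))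
  have hFanti : Antitone fun t => F (T - t) := fun a b hab => hFmono (by linarith)
  have hmemT : ∀ t ∈ Icc (0:ℝ) T, T - t ∈ Icc (0:ℝ) T := fun t ht =>
    ⟨by linarith [ht.2], by linarith [ht.1]⟩
  have hFae : (fun t => F (T - t)) =ᵐ[m] fun t => f (T - t) := by
    filter_upwards [hm] with t ht
    have h1 := hmemT t ht
    rw [hF]; simp only
    rw [hf _ h1, ENNReal.toReal_ofReal (hf0 _ h1)]
  refine Integrable.mono' (integrable_const (F T))
    (hFanti.measurable.aestronglyMeasurable.congr hFae) ?_
  filter_upwards [hm] with t ht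
  have h1 := hmemT t ht
  rw [Real.norm_eq_abs, abs_of_nonneg (hf0 _ h1)]
  have : f (T - t) = F (T - t) := by
    rw [hF]; simp only
    rw [hf _ h1, ENNReal.toReal_ofReal (hf0 _ h1)]
  rw [this]
  exact hFmono (by linarith [ht.1])

end Aux
section Main

variable {K J : ℕ}

lemma x_slack_nonneg (A : Matrix (Fin K) (Fin J) ℝ) (b β lam : Fin K → ℝ) (T : ℝ)
    (U : ℝ → Fin J → ℝ) (hU : PrimalFeasible A b β lam T U) (νP : Fin K → Measure ℝ) :
    0 ≤ ∑ k, ∫ s in Icc (0:ℝ) T, xSlack A b β lam T U (T - s) k ∂(νP k) := by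
  refine Finset.sum_nonneg fun k _ => setIntegral_nonneg measurableSet_Icc fun s hs => ?_
  rcases hs.1.eq_or_lt with h0 | h0
  · have hs0 : s = 0 := h0.symm
    subst hs0
    simp only [xSlack, sub_zero]
    rw [if_neg (lt_irrefl T)]
    linarith [hU.2.2.2.2 k]
  · have hmem : T - s ∈ Ico (0:ℝ) T := ⟨by linarith [hs.2], by linarith⟩
    simp only [xSlack]
    rw [if_pos hmem.2]
    linarith [hU.2.2.2.1 (T - s) hmem k]

lemma q_slack_nonneg (A : Matrix (Fin K) (Fin J) ℝ) (c γ μ : Fin J → ℝ) (T : ℝ)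
    (P : ℝ → Fin K → ℝ) (hP : DualFeasible A c γ μ T P) (νU : Fin J → Measure ℝ) :
    0 ≤ ∑ j, ∫ t in Icc (0:ℝ) T, qSlack A c γ μ T P (T - t) j ∂(νU j) := by
  refine Finset.sum_nonneg fun j _ => setIntegral_nonneg measurableSet_Icc fun t ht => ?_
  rcases ht.1.eq_or_lt with h0 | h0
  · have ht0 : t = 0 := h0.symm
    subst ht0
    simp only [qSlack, sub_zero]
    rw [if_neg (lt_irrefl T)]
    linarith [hP.2.2.2.2 j]
  · have hmem : T - t ∈ Ico (0:ℝ) T := ⟨by linarith [ht.2], by linarith⟩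
    simp only [qSlack]
    rw [if_pos hmem.2]
    linarith [hP.2.2.2.1 (T - t) hmem j]

lemma duality_identity (A : Matrix (Fin K) (Fin J) ℝ) (b β lam : Fin K → ℝ)
    (c γ μ : Fin J → ℝ) (T : ℝ) (hT : 0 < T) (U : ℝ → Fin J → ℝ) (P : ℝ → Fin K → ℝ)
    (νU : Fin J → Measure ℝ) (νP : Fin K → Measure ℝ)
    (hU : PrimalFeasible A b β lam T U) (hP : DualFeasible A c γ μ T P)
    (hνU : LSFamily T U νU) (hνP : LSFamily T P νP) :
    zDual b β lam T P νP - zPrimal c γ μ T U νU =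
      (∑ k, ∫ s in Icc (0:ℝ) T, xSlack A b β lam T U (T - s) k ∂(νP k)) +
      (∑ j, ∫ t in Icc (0:ℝ) T, qSlack A c γ μ T P (T - t) j ∂(νU j)) := by
  have hTmem : T ∈ Icc (0:ℝ) T := ⟨hT.le, le_refl T⟩
  have h0mem : (0:ℝ) ∈ Icc (0:ℝ) T := ⟨le_refl 0, hT.le⟩
  have hUpos : ∀ j, ∀ x ∈ Icc (0:ℝ) T, 0 ≤ U x j := fun j x hx =>
    le_trans (hU.2.2.1 j) (hU.1 j h0mem hx hx.1)
  have hPpos : ∀ k, ∀ x ∈ Icc (0:ℝ) T, 0 ≤ P x k := fun k x hx =>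
    le_trans (hP.2.2.1 k) (hP.1 k h0mem hx hx.1)
  have hUiic : ∀ j, ∀ x ∈ Icc (0:ℝ) T, νU j (Iic x) = ENNReal.ofReal (U x j) :=
    fun j x hx => Iic_measure_eq (hνU j).1 hx ((hνU j).2 x hx)
  have hPiic : ∀ k, ∀ x ∈ Icc (0:ℝ) T, νP k (Iic x) = ENNReal.ofReal (P x k) :=
    fun k x hx => Iic_measure_eq (hνP k).1 hx ((hνP k).2 x hx)
  have finU : ∀ j, IsFiniteMeasure (νU j) := fun j =>
    finite_of_ls hT.le (hνU j).1 ((hνU j).2 T hTmem)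
  have finP : ∀ k, IsFiniteMeasure (νP k) := fun k =>
    finite_of_ls hT.le (hνP k).1 ((hνP k).2 T hTmem)
  have aeU : ∀ j, ∀ᵐ t ∂(νU j), t ∈ Icc (0:ℝ) T := fun j => ae_mem_Icc_of_compl_null (hνU j).1
  have aeP : ∀ k, ∀ᵐ s ∂(νP k), s ∈ Icc (0:ℝ) T := fun k => ae_mem_Icc_of_compl_null (hνP k).1
  have resU : ∀ j, (νU j).restrict (Icc (0:ℝ) T) = νU j := fun j =>
    Measure.restrict_eq_self_of_ae_mem (aeU j)
  have resP : ∀ k, (νP k).restrict (Icc (0:ℝ) T) = νP k := fun k =>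
    Measure.restrict_eq_self_of_ae_mem (aeP k)
  have hCint : ∀ j k, Integrable (fun t => P (T - t) k) (νU j) := fun j k => by
    haveI := finU j; haveI := finP k
    exact integrable_comp_sub (aeU j) (νP k) (fun x => P x k) (hPiic k) (hPpos k)
  have hDint : ∀ k j, Integrable (fun s => U (T - s) j) (νP k) := fun k j => by
    haveI := finU j; haveI := finP k
    exact integrable_comp_sub (aeP k) (νU j) (fun x => U x j) (hUiic j) (hUpos j)
  have hCD : ∀ j k, (∫ t, P (T - t) k ∂(νU j)) = ∫ s, U (T - s) j ∂(νP k) := fun j k => by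
    haveI := finU j; haveI := finP k
    exact key_fubini (νU j) (νP k) (aeU j) (aeP k) (fun x => P x k) (fun x => U x j)
      (hPiic k) (hUiic j) (hPpos k) (hUpos j)
  -- primal decomposition
  have hQdec : ∀ j, (∫ t, qSlack A c γ μ T P (T - t) j ∂(νU j)) =
      (∑ k, A k j * ∫ t, P (T - t) k ∂(νU j)) -
      (∫ t, (γ j + (T - t) * c j) ∂(νU j)) - μ j * U 0 j := by
    intro j
    haveI := finU j
    set g1 : ℝ → ℝ := fun t => ∑ k, A k j * P (T - t) k with hg1
    set g2 : ℝ → ℝ := fun t => γ j + (T - t) * c j with hg2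
    set g3 : ℝ → ℝ := fun t => if T - t < T then 0 else μ j with hg3
    have hpt : (fun t => qSlack A c γ μ T P (T - t) j) = fun t => g1 t - g2 t - g3 t := by
      funext t
      simp only [qSlack, Matrix.mulVec, Matrix.transpose_apply, dotProduct, hg1, hg2, hg3]
      ring
    have hint1 : Integrable g1 (νU j) :=
      integrable_finset_sum _ fun k _ => (hCint j k).const_mul (A k j)
    have hint2 : Integrable g2 (νU j) := by
      refine Integrable.mono' (integrable_const (|γ j| + T * |c j|))
        ((by fun_prop : Measurable g2).aestronglyMeasurable) ?_
      filter_upwards [aeU j] with t ht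
      rw [Real.norm_eq_abs]
      have h1 : |(T - t) * c j| = (T - t) * |c j| := by
        rw [abs_mul, abs_of_nonneg (by linarith [ht.2] : (0:ℝ) ≤ T - t)]
      calc |γ j + (T - t) * c j| ≤ |γ j| + |(T - t) * c j| := abs_add_le _ _
        _ ≤ |γ j| + T * |c j| := by
            rw [h1]
            nlinarith [abs_nonneg (c j), ht.1, ht.2]
    have hg3eq : g3 = (Iic (0:ℝ)).indicator (fun _ => μ j) := by
      funext t
      simp only [hg3, indicator, mem_Iic]
      by_cases h : t ≤ 0
      · rw [if_neg (by linarith : ¬ (T - t < T)), if_pos h]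
      · rw [if_pos (by push_neg at h; linarith : T - t < T), if_neg h]
    have hint3 : Integrable g3 (νU j) := by
      rw [hg3eq]; exact (integrable_const (μ j)).indicator measurableSet_Iic
    have hI3 : (∫ t, g3 t ∂(νU j)) = μ j * U 0 j := by
      rw [hg3eq, integral_indicator_const _ measurableSet_Iic, measureReal_def, hUiic j 0 h0mem,
        smul_eq_mul, ENNReal.toReal_ofReal (hU.2.2.1 j), mul_comm]
    have eB : (∫ t, (g1 t - g2 t - g3 t) ∂(νU j)) =
        (∫ t, (g1 t - g2 t) ∂(νU j)) - ∫ t, g3 t ∂(νU j) :=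
      integral_sub (hint1.sub hint2) hint3
    have eA : (∫ t, (g1 t - g2 t) ∂(νU j)) = (∫ t, g1 t ∂(νU j)) - ∫ t, g2 t ∂(νU j) :=
      integral_sub hint1 hint2
    have eS : (∫ t, g1 t ∂(νU j)) = ∑ k, A k j * ∫ t, P (T - t) k ∂(νU j) := by
      rw [hg1]
      rw [integral_finset_sum _ fun k _ => (hCint j k).const_mul (A k j)]
      simp only [integral_const_mul]
    rw [hpt, eB, eA, hI3, eS]
  -- dual decomposition
  have hXdec : ∀ k, (∫ s, xSlack A b β lam T U (T - s) k ∂(νP k)) =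
      lam k * P 0 k + (∫ s, (β k + (T - s) * b k) ∂(νP k)) -
      ∑ j, A k j * ∫ s, U (T - s) j ∂(νP k) := by
    intro k
    haveI := finP k
    set g1 : ℝ → ℝ := fun s => ∑ j, A k j * U (T - s) j with hg1
    set g2 : ℝ → ℝ := fun s => β k + (T - s) * b k with hg2
    set g3 : ℝ → ℝ := fun s => if T - s < T then 0 else lam k with hg3
    have hpt : (fun s => xSlack A b β lam T U (T - s) k) = fun s => g2 s + g3 s - g1 s := by
      funext s
      simp only [xSlack, Matrix.mulVec, dotProduct, hg1, hg2, hg3]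
      try ring
    have hint1 : Integrable g1 (νP k) :=
      integrable_finset_sum _ fun j _ => (hDint k j).const_mul (A k j)
    have hint2 : Integrable g2 (νP k) := by
      refine Integrable.mono' (integrable_const (|β k| + T * |b k|))
        ((by fun_prop : Measurable g2).aestronglyMeasurable) ?_
      filter_upwards [aeP k] with s hs
      rw [Real.norm_eq_abs]
      have h1 : |(T - s) * b k| = (T - s) * |b k| := by
        rw [abs_mul, abs_of_nonneg (by linarith [hs.2] : (0:ℝ) ≤ T - s)]
      calc |β k + (T - s) * b k| ≤ |β k| + |(T - s) * b k| := abs_add_le _ _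
        _ ≤ |β k| + T * |b k| := by
            rw [h1]
            nlinarith [abs_nonneg (b k), hs.1, hs.2]
    have hg3eq : g3 = (Iic (0:ℝ)).indicator (fun _ => lam k) := by
      funext s
      simp only [hg3, indicator, mem_Iic]
      by_cases h : s ≤ 0
      · rw [if_neg (by linarith : ¬ (T - s < T)), if_pos h]
      · rw [if_pos (by push_neg at h; linarith : T - s < T), if_neg h]
    have hint3 : Integrable g3 (νP k) := by
      rw [hg3eq]; exact (integrable_const (lam k)).indicator measurableSet_Iic
    have hI3 : (∫ s, g3 s ∂(νP k)) = lam k * P 0 k := by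
      rw [hg3eq, integral_indicator_const _ measurableSet_Iic, measureReal_def, hPiic k 0 h0mem,
        smul_eq_mul, ENNReal.toReal_ofReal (hP.2.2.1 k), mul_comm]
    have eB : (∫ s, (g2 s + g3 s - g1 s) ∂(νP k)) =
        (∫ s, (g2 s + g3 s) ∂(νP k)) - ∫ s, g1 s ∂(νP k) :=
      integral_sub (hint2.add hint3) hint1
    have eA : (∫ s, (g2 s + g3 s) ∂(νP k)) = (∫ s, g2 s ∂(νP k)) + ∫ s, g3 s ∂(νP k) :=
      integral_add hint2 hint3
    have eS : (∫ s, g1 s ∂(νP k)) = ∑ j, A k j * ∫ s, U (T - s) j ∂(νP k) := by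
      rw [hg1]
      rw [integral_finset_sum _ fun j _ => (hDint k j).const_mul (A k j)]
      simp only [integral_const_mul]
    rw [hpt, eB, eA, hI3, eS]
    ring
  -- assemble
  have hswap : (∑ k, ∑ j, A k j * ∫ s, U (T - s) j ∂(νP k)) =
      ∑ j, ∑ k, A k j * ∫ t, P (T - t) k ∂(νU j) := by
    rw [Finset.sum_comm]
    exact Finset.sum_congr rfl fun j _ => Finset.sum_congr rfl fun k _ => by rw [hCD j k]
  simp only [zPrimal, zDual, resU, resP, hQdec, hXdec]
  simp only [Finset.sum_add_distrib, Finset.sum_sub_distrib]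
  linarith [hswap]

end Main

/-- `z(U) = z*(P)` iff the complementary slackness conditions hold; in that case
`U` is an optimal solution of M-CLP and `P` is an optimal solution of M-CLP*. -/
theorem equal_objectives_iff_complementary_slackness {K J : ℕ}
    (A : Matrix (Fin K) (Fin J) ℝ) (b β lam : Fin K → ℝ) (c γ μ : Fin J → ℝ) (T : ℝ)
    (hT : 0 < T)
    (U : ℝ → Fin J → ℝ) (P : ℝ → Fin K → ℝ)
    (νU : Fin J → Measure ℝ) (νP : Fin K → Measure ℝ)
    (hU : PrimalFeasible A b β lam T U) (hP : DualFeasible A c γ μ T P)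
    (hνU : LSFamily T U νU) (hνP : LSFamily T P νP) :
    (zPrimal c γ μ T U νU = zDual b β lam T P νP ↔
      (∑ k, ∫ s in Set.Icc (0:ℝ) T, xSlack A b β lam T U (T - s) k ∂(νP k)) = 0 ∧
      (∑ j, ∫ t in Set.Icc (0:ℝ) T, qSlack A c γ μ T P (T - t) j ∂(νU j)) = 0) ∧
    (zPrimal c γ μ T U νU = zDual b β lam T P νP →
      (∀ (U' : ℝ → Fin J → ℝ) (νU' : Fin J → Measure ℝ),
        PrimalFeasible A b β lam T U' → LSFamily T U' νU' →
        zPrimal c γ μ T U' νU' ≤ zPrimal c γ μ T U νU) ∧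
      (∀ (P' : ℝ → Fin K → ℝ) (νP' : Fin K → Measure ℝ),
        DualFeasible A c γ μ T P' → LSFamily T P' νP' →
        zDual b β lam T P νP ≤ zDual b β lam T P' νP')) := by
  have hid := duality_identity A b β lam c γ μ T hT U P νU νP hU hP hνU hνP
  have hX := x_slack_nonneg A b β lam T U hU νP
  have hQ := q_slack_nonneg A c γ μ T P hP νU
  constructor
  · constructor
    · intro h
      constructor <;> linarith
    · rintro ⟨h1, h2⟩
      linarith
  · intro h
    constructor
    · intro U' νU' hU' hνU'
      have hid' := duality_identity A b β lam c γ μ T hT U' P νU' νP hU' hP hνU' hνP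
      have hX' := x_slack_nonneg A b β lam T U' hU' νP
      have hQ' := q_slack_nonneg A c γ μ T P hP νU'
      linarith
    · intro P' νP' hP' hνP'
      have hid' := duality_identity A b β lam c γ μ T hT U P' νU νP' hU hP' hνU hνP'
      have hX' := x_slack_nonneg A b β lam T U hU νP'
      have hQ' := q_slack_nonneg A c γ μ T P' hP' νU
      linarith
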